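/- Let m, k ∈ ℕ, let X : ℝᵐ × ℝᵏ → ℝᵐ be continuous, let a < b, let u : ℝ → ℝᵏ, and let γ : ℝ → ℝᵐ be continuous with r ↦ X(γ(r), u(r)) integrable on [a,b] and γ(t) = γ(a) + ∫_a^t X(γ(r), u(r)) dr for all t ∈ [a,b]. Let t₁ ∈ (a,b), l₁ > 0 and u₁ ∈ ℝᵏ, and assume t₁ is a Lebesgue time for X∘(γ,u), i.e. (1/h)·∫_{t₁−h}^{t₁} X(γ(r), u(r)) dr → X(γ(t₁), u(t₁)) as h → 0⁺. Let ε > 0 with t₁ − l₁ε > a, and for each s ∈ (0, ε] let γₛ : ℝ → ℝᵐ be continuous with r ↦ X(γₛ(r), u[π₁ˢ](r)) integrable on [a,t₁] and γₛ(t) = γ(a) + ∫_a^t X(γₛ(r), u[π₁ˢ](r)) dr for all t ∈ [a,t₁], where u[π₁ˢ](r) = u₁ for r ∈ [t₁ − l₁s, t₁] and u[π₁ˢ](r) = u(r) otherwise. Assume moreover that γₛ(t) = γ(t) for all t ∈ [a, t₁ − l₁s] and that sup_{t ∈ [a,t₁]} ‖γₛ(t) − γ(t)‖ → 0 as s → 0⁺.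 Then (γₛ(t₁) − γ(t₁))/s → l₁ · (X(γ(t₁), u₁) − X(γ(t₁), u(t₁))) as s → 0⁺; i.e. the curve s ↦ γₛ(t₁) has at s = 0 the elementary perturbation vector v[π₁] = (X(γ(t₁), u₁) − X(γ(t₁), u(t₁))) · l₁ as one-sided tangent vector. -/

import Mathlib

open MeasureTheory Set Filter

theorem elementary_perturbation_vector
    (m k : ℕ)
    (X : EuclideanSpace ℝ (Fin m) × EuclideanSpace ℝ (Fin k) → EuclideanSpace ℝ (Fin m))
    (hX : Continuous X)
    (a b : ℝ) (hab : a < b)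
    (u : ℝ → EuclideanSpace ℝ (Fin k))
    (γ : ℝ → EuclideanSpace ℝ (Fin m)) (hγc : Continuous γ)
    (hint : IntervalIntegrable (fun r => X (γ r, u r)) volume a b)
    (hγ : ∀ t ∈ Icc a b, γ t = γ a + ∫ r in a..t, X (γ r, u r))
    (t₁ : ℝ) (ht₁ : t₁ ∈ Ioo a b) (l₁ : ℝ) (hl₁ : 0 < l₁)
    (u₁ : EuclideanSpace ℝ (Fin k))
    (hLeb : Tendsto (fun h : ℝ => (1 / h) • ∫ r in (t₁ - h)..t₁, X (γ r, u r))
      (nhdsWithin 0 (Ioi 0)) (nhds (X (γ t₁, u t₁))))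
    (ε : ℝ) (hε : 0 < ε) (hεa : a < t₁ - l₁ * ε)
    (us : ℝ → ℝ → EuclideanSpace ℝ (Fin k))
    (hus : ∀ s r : ℝ, us s r = if t₁ - l₁ * s ≤ r ∧ r ≤ t₁ then u₁ else u r)
    (γs : ℝ → ℝ → EuclideanSpace ℝ (Fin m))
    (hγsc : ∀ s ∈ Ioc (0 : ℝ) ε, Continuous (γs s))
    (hγsint : ∀ s ∈ Ioc (0 : ℝ) ε,
      IntervalIntegrable (fun r => X (γs s r, us s r)) volume a t₁)
    (hγs : ∀ s ∈ Ioc (0 : ℝ) ε, ∀ t ∈ Icc a t₁,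
      γs s t = γ a + ∫ r in a..t, X (γs s r, us s r))
    (hagree : ∀ s ∈ Ioc (0 : ℝ) ε, ∀ t ∈ Icc a (t₁ - l₁ * s), γs s t = γ t)
    (hunif : TendstoUniformlyOn (fun s t => γs s t) γ (nhdsWithin 0 (Ioi 0)) (Icc a t₁)) :
    Tendsto (fun s : ℝ => (1 / s) • (γs s t₁ - γ t₁)) (nhdsWithin 0 (Ioi 0))
      (nhds (l₁ • (X (γ t₁, u₁) - X (γ t₁, u t₁)))) := by
  -- abbreviations
  have ht₁ab : t₁ ∈ Icc a b := ⟨le_of_lt ht₁.1, le_of_lt ht₁.2⟩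
  have ht₁I : t₁ ∈ Icc a t₁ := ⟨le_of_lt ht₁.1, le_refl _⟩
  -- basic facts for s ∈ Ioc 0 ε
  have hc_lt : ∀ s ∈ Ioc (0:ℝ) ε, t₁ - l₁ * s < t₁ := by
    intro s hs
    have : 0 < l₁ * s := mul_pos hl₁ hs.1
    linarith
  have hac : ∀ s ∈ Ioc (0:ℝ) ε, a < t₁ - l₁ * s := by
    intro s hs
    have : l₁ * s ≤ l₁ * ε := mul_le_mul_of_nonneg_left hs.2 hl₁.le
    linarith
  -- Key identity
  have key : ∀ s ∈ Ioc (0:ℝ) ε, γs s t₁ - γ t₁ =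
      (∫ r in (t₁ - l₁ * s)..t₁, X (γs s r, u₁)) - ∫ r in (t₁ - l₁ * s)..t₁, X (γ r, u r) := by
    intro s hs
    set c := t₁ - l₁ * s with hc
    have hac' := hac s hs
    have hct := hc_lt s hs
    have hsplit_s : (∫ r in a..c, X (γs s r, us s r)) + ∫ r in c..t₁, X (γs s r, us s r)
        = ∫ r in a..t₁, X (γs s r, us s r) := by
      apply intervalIntegral.integral_add_adjacent_intervals
      · refine (hγsint s hs).mono_set ?_
        rw [uIcc_of_le hac'.le, uIcc_of_le (hac'.le.trans hct.le)]
        exact Icc_subset_Icc le_rfl hct.le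
      · refine (hγsint s hs).mono_set ?_
        rw [uIcc_of_le hct.le, uIcc_of_le (hac'.le.trans hct.le)]
        exact Icc_subset_Icc hac'.le le_rfl
    have hsplit : (∫ r in a..c, X (γ r, u r)) + ∫ r in c..t₁, X (γ r, u r)
        = ∫ r in a..t₁, X (γ r, u r) := by
      apply intervalIntegral.integral_add_adjacent_intervals
      · refine hint.mono_set ?_
        rw [uIcc_of_le hac'.le, uIcc_of_le hab.le]
        exact Icc_subset_Icc le_rfl (hct.le.trans ht₁.2.le)
      · refine hint.mono_set ?_
        rw [uIcc_of_le hct.le, uIcc_of_le hab.le]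
        exact Icc_subset_Icc hac'.le ht₁.2.le
    have h1 : (∫ r in a..c, X (γs s r, us s r)) = ∫ r in a..c, X (γ r, u r) := by
      apply intervalIntegral.integral_congr_ae
      have hae : ∀ᵐ x : ℝ, x ≠ c := by rw [ae_iff]; simpa using Real.volume_singleton
      filter_upwards [hae] with r hr hrI
      rw [uIoc_of_le hac'.le] at hrI
      have hrc : r < c := lt_of_le_of_ne hrI.2 hr
      have hus' : us s r = u r := by
        rw [hus s r, if_neg]; rintro ⟨h1, -⟩; exact absurd h1 (not_le.2 hrc)
      have hgs : γs s r = γ r := hagree s hs r ⟨hrI.1.le, hrI.2⟩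
      rw [hus', hgs]
    have h2 : (∫ r in c..t₁, X (γs s r, us s r)) = ∫ r in c..t₁, X (γs s r, u₁) := by
      apply intervalIntegral.integral_congr
      intro r hrI
      rw [uIcc_of_le hct.le] at hrI
      show X (γs s r, us s r) = X (γs s r, u₁)
      rw [hus s r, if_pos ⟨hrI.1, hrI.2⟩]
    have e1 := hγs s hs t₁ ht₁I
    have e2 := hγ t₁ ht₁ab
    rw [e1, e2, ← hsplit_s, ← hsplit, h1, h2]
    abel
  -- eventual membership
  have hIoc : Ioc (0:ℝ) ε ∈ nhdsWithin (0:ℝ) (Ioi 0) := Ioc_mem_nhdsGT_of_mem ⟨le_refl _, hε⟩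
  -- scaling map tendsto
  have hscale : Tendsto (fun s : ℝ => l₁ * s) (nhdsWithin 0 (Ioi 0)) (nhdsWithin 0 (Ioi 0)) := by
    apply tendsto_nhdsWithin_of_tendsto_nhds_of_eventually_within
    · have : Tendsto (fun s : ℝ => l₁ * s) (nhds 0) (nhds (l₁ * 0)) :=
        (continuous_const.mul continuous_id).tendsto 0
      simpa using this.mono_left nhdsWithin_le_nhds
    · filter_upwards [self_mem_nhdsWithin] with s hs
      exact mul_pos hl₁ hs
  -- second limit
  have hlim2 : Tendsto (fun s : ℝ => (1 / s) • ∫ r in (t₁ - l₁ * s)..t₁, X (γ r, u r))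
      (nhdsWithin 0 (Ioi 0)) (nhds (l₁ • X (γ t₁, u t₁))) := by
    have := (hLeb.comp hscale).const_smul l₁
    apply this.congr'
    filter_upwards [self_mem_nhdsWithin] with s hs
    have hs0 : s ≠ 0 := ne_of_gt hs
    simp only [Function.comp]
    rw [smul_smul]
    congr 1
    field_simp
  -- first limit
  have hlim1 : Tendsto (fun s : ℝ => (1 / s) • ∫ r in (t₁ - l₁ * s)..t₁, X (γs s r, u₁))
      (nhdsWithin 0 (Ioi 0)) (nhds (l₁ • X (γ t₁, u₁))) := by
    have core : Tendsto (fun s : ℝ => (1 / (l₁ * s)) • ∫ r in (t₁ - l₁ * s)..t₁, X (γs s r, u₁))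
        (nhdsWithin 0 (Ioi 0)) (nhds (X (γ t₁, u₁))) := by
      rw [Metric.tendsto_nhds]
      intro δ hδ
      -- continuity of X at (γ t₁, u₁)
      obtain ⟨δ', hδ', hXcont⟩ := Metric.continuous_iff.1 hX (γ t₁, u₁) (δ / 2) (half_pos hδ)
      -- continuity of γ at t₁
      obtain ⟨η, hη, hγcont⟩ := Metric.continuous_iff.1 hγc t₁ (δ' / 2) (half_pos hδ')
      have hu := (Metric.tendstoUniformlyOn_iff.1 hunif) (δ' / 2) (half_pos hδ')
      have hsmall : Ioo (0:ℝ) (η / l₁) ∈ nhdsWithin (0:ℝ) (Ioi 0) :=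
        Ioo_mem_nhdsGT_of_mem ⟨le_refl _, div_pos hη hl₁⟩
      filter_upwards [hIoc, hu, hsmall] with s hs hus' hss
      set h := l₁ * s with hh
      have hh0 : 0 < h := mul_pos hl₁ hs.1
      have hhη : h < η := by
        have := hss.2
        calc h = l₁ * s := rfl
        _ < l₁ * (η / l₁) := by exact mul_lt_mul_of_pos_left this hl₁
        _ = η := by field_simp
      have hsub : Icc (t₁ - h) t₁ ⊆ Icc a t₁ :=
        Icc_subset_Icc (le_of_lt (hac s hs)) le_rfl
      -- pointwise bound
      have hbound : ∀ r ∈ uIoc (t₁ - h) t₁, ‖X (γs s r, u₁) - X (γ t₁, u₁)‖ ≤ δ / 2 := by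
        intro r hrI
        rw [uIoc_of_le (by linarith : t₁ - h ≤ t₁)] at hrI
        have hrIcc : r ∈ Icc (t₁ - h) t₁ := ⟨hrI.1.le, hrI.2⟩
        have hd1 : dist (γ r) (γs s r) < δ' / 2 := hus' r (hsub hrIcc)
        have hd2 : dist (γ r) (γ t₁) < δ' / 2 := by
          apply hγcont
          rw [Real.dist_eq, abs_sub_lt_iff]
          constructor <;> [linarith [hrIcc.2]; linarith [hrIcc.1]]
        have hd : dist (γs s r) (γ t₁) < δ' :=
          calc dist (γs s r) (γ t₁) ≤ dist (γs s r) (γ r) + dist (γ r) (γ t₁) := dist_triangle _ _ _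
          _ < δ' / 2 + δ' / 2 := by rw [dist_comm (γs s r) (γ r)]; exact add_lt_add hd1 hd2
          _ = δ' := by ring
        have := hXcont (γs s r, u₁) (by
          rw [Prod.dist_eq]
          simp only [dist_self]
          exact max_lt hd hδ')
        rw [dist_eq_norm] at this
        exact this.le
      -- integrability of the perturbed integrand
      have hcont : Continuous (fun r => X (γs s r, u₁)) :=
        hX.comp ((hγsc s hs).prodMk continuous_const)
      have hintc : IntervalIntegrable (fun r => X (γs s r, u₁)) volume (t₁ - h) t₁ :=
        hcont.intervalIntegrable _ _
      -- rewrite difference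
      have hconst : ∫ _ in (t₁ - h)..t₁, X (γ t₁, u₁) = (t₁ - (t₁ - h)) • X (γ t₁, u₁) :=
        intervalIntegral.integral_const _
      have hdiff : (1 / h) • (∫ r in (t₁ - h)..t₁, X (γs s r, u₁)) - X (γ t₁, u₁)
          = (1 / h) • ∫ r in (t₁ - h)..t₁, (X (γs s r, u₁) - X (γ t₁, u₁)) := by
        rw [intervalIntegral.integral_sub hintc (intervalIntegrable_const), hconst, smul_sub,
          smul_smul]
        congr 1
        have : (1 / h) * (t₁ - (t₁ - h)) = 1 := by field_simp; ring
        rw [this, one_smul]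
      rw [dist_eq_norm, hdiff]
      have hnorm := intervalIntegral.norm_integral_le_of_norm_le_const hbound
      calc ‖(1 / h) • ∫ r in (t₁ - h)..t₁, (X (γs s r, u₁) - X (γ t₁, u₁))‖
          = |1 / h| * ‖∫ r in (t₁ - h)..t₁, (X (γs s r, u₁) - X (γ t₁, u₁))‖ := by
            rw [norm_smul, Real.norm_eq_abs]
        _ ≤ (1 / h) * (δ / 2 * |t₁ - (t₁ - h)|) := by
            rw [abs_of_pos (one_div_pos.2 hh0)]
            exact mul_le_mul_of_nonneg_left hnorm (one_div_pos.2 hh0).le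
        _ = δ / 2 := by
            rw [abs_of_pos (by linarith : (0:ℝ) < t₁ - (t₁ - h))]
            field_simp
            ring
        _ < δ := by linarith
    have := core.const_smul l₁
    apply this.congr'
    filter_upwards [self_mem_nhdsWithin] with s hs
    have hs0 : s ≠ 0 := ne_of_gt hs
    rw [smul_smul]
    congr 1
    field_simp
  -- combine
  have := hlim1.sub hlim2
  rw [← smul_sub] at this
  apply this.congr'
  filter_upwards [hIoc] with s hs
  rw [key s hs, smul_sub]
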